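/- Let E be a real inner product space, let u, v ∈ E be unit vectors (‖u‖ = 1 and ‖v‖ = 1), and let a, b, t be real numbers with a ≥ 0, b ≥ 0 and t ≥ 0. Then ‖(a+t)•u − (b+t)•v‖ ≥ ‖a•u − b•v‖. In particular, if initially ‖a•u − b•v‖ > 2r for some r > 0, then after both points travel an additional distance t radially outward from the common center their distance still exceeds 2r, so two simultaneously moving robots in a linear expansion never collide. -/

import Mathlib

theorem linear_expansion_moving_robots_no_collision
    {E : Type*} [NormedAddCommGroup E] [InnerProductSpace ℝ E]
    (u v : E) (hu : ‖u‖ = 1) (hv : ‖v‖ = 1)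
    (a b t : ℝ) (ha : 0 ≤ a) (hb : 0 ≤ b) (ht : 0 ≤ t) :
    ‖a • u - b • v‖ ≤ ‖(a + t) • u - (b + t) • v‖ ∧
      ∀ r : ℝ, 0 < r → 2 * r < ‖a • u - b • v‖ →
        2 * r < ‖(a + t) • u - (b + t) • v‖ := by
  have key : ‖a • u - b • v‖ ≤ ‖(a + t) • u - (b + t) • v‖ := by
    have h1 : ‖a • u - b • v‖ ^ 2 = ‖a • u‖ ^ 2 - 2 * inner ℝ (a • u) (b • v) + ‖b • v‖ ^ 2 :=
      @norm_sub_sq_real E _ _ _ _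
    have h2 : ‖(a + t) • u - (b + t) • v‖ ^ 2
        = ‖(a + t) • u‖ ^ 2 - 2 * inner ℝ ((a + t) • u) ((b + t) • v) + ‖(b + t) • v‖ ^ 2 :=
      @norm_sub_sq_real E _ _ _ _
    have hc : |(inner ℝ u v : ℝ)| ≤ 1 := by
      have := abs_real_inner_le_norm u v
      rwa [hu, hv, mul_one] at this
    have hi1 : (inner ℝ (a • u) (b • v) : ℝ) = a * b * inner ℝ u v := by
      rw [real_inner_smul_left, real_inner_smul_right]; ring
    have hi2 : (inner ℝ ((a + t) • u) ((b + t) • v) : ℝ) = (a + t) * (b + t) * inner ℝ u v := by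
      rw [real_inner_smul_left, real_inner_smul_right]; ring
    have hn1 : ‖a • u‖ = a := by rw [norm_smul, hu, mul_one, Real.norm_eq_abs, abs_of_nonneg ha]
    have hn2 : ‖b • v‖ = b := by rw [norm_smul, hv, mul_one, Real.norm_eq_abs, abs_of_nonneg hb]
    have hn3 : ‖(a + t) • u‖ = a + t := by
      rw [norm_smul, hu, mul_one, Real.norm_eq_abs, abs_of_nonneg (by linarith)]
    have hn4 : ‖(b + t) • v‖ = b + t := by
      rw [norm_smul, hv, mul_one, Real.norm_eq_abs, abs_of_nonneg (by linarith)]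
    have hsq : ‖a • u - b • v‖ ^ 2 ≤ ‖(a + t) • u - (b + t) • v‖ ^ 2 := by
      rw [h1, h2, hi1, hi2, hn1, hn2, hn3, hn4]
      have hc' := abs_le.mp hc
      nlinarith [mul_nonneg (mul_nonneg ht (by linarith : (0:ℝ) ≤ a + b + t))
        (by linarith [hc'.2] : (0:ℝ) ≤ 1 - inner ℝ u v)]
    exact (pow_le_pow_iff_left₀ (norm_nonneg _) (norm_nonneg _) two_ne_zero).mp hsq
  exact ⟨key, fun r _ h => lt_of_lt_of_le h key⟩
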